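/- Let n ≥ 1. The constant 1 in the inequality j_{Bⁿ}(x,y) ≤ ĉ_{Bⁿ}(x,y) is best possible: for every λ ∈ (0,1) there exists x ∈ Bⁿ with x ≠ 0 such that log(1 + |x|/(1−|x|)) > λ·|x|/(1−|x|). (Here the right-hand side is λ·ĉ_{Bⁿ}(x,0), since ĉ_{Bⁿ}(x,0) = |x| / ((1−|x|)·|0 − x/|x||) = |x|/(1−|x|).) -/

import Mathlib

/-- for every `λ ∈ (0,1)` there exists `x ∈ Bⁿ`, `x ≠ 0`, with
`log(1 + |x|/(1−|x|)) > λ·|x|/(1−|x|)`, so the constant 1 in `j_{Bⁿ} ≤ ĉ_{Bⁿ}` is sharp. -/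
theorem jMet_le_cHat_sharp (n : ℕ) (hn : 1 ≤ n) (lam : ℝ) (hlam : lam ∈ Set.Ioo (0 : ℝ) 1) :
    ∃ x ∈ Metric.ball (0 : EuclideanSpace ℝ (Fin n)) 1, x ≠ 0 ∧
      lam * (‖x‖ / (1 - ‖x‖)) < Real.log (1 + ‖x‖ / (1 - ‖x‖)) := by
  obtain ⟨hl0, hl1⟩ := hlam
  set t : ℝ := (1 - lam) / lam with ht
  have ht0 : 0 < t := div_pos (by linarith) hl0
  have h1t : 1 + t = 1 / lam := by field_simp [ht]; rw [ht, add_mul, div_mul_cancel₀ _ hl0.ne']; ring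
  set r : ℝ := t / (1 + t) with hr
  have hr0 : 0 < r := div_pos ht0 (by linarith)
  have hr1 : r < 1 := by
    rw [hr, div_lt_one (by linarith)]; linarith
  set i : Fin n := ⟨0, hn⟩
  refine ⟨r • EuclideanSpace.single i (1 : ℝ), ?_, ?_, ?_⟩
  · have hnorm : ‖r • EuclideanSpace.single i (1 : ℝ)‖ = r := by
      rw [norm_smul, EuclideanSpace.norm_single, norm_one, mul_one,
        Real.norm_eq_abs, abs_of_pos hr0]
    simpa [hnorm] using hr1
  · intro h
    have := congrArg (fun v : EuclideanSpace ℝ (Fin n) => v i) h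
    simp [EuclideanSpace.single_apply] at this
    exact absurd this (by positivity)
  · have hnorm : ‖r • EuclideanSpace.single i (1 : ℝ)‖ = r := by
      rw [norm_smul, EuclideanSpace.norm_single, norm_one, mul_one,
        Real.norm_eq_abs, abs_of_pos hr0]
    rw [hnorm]
    have h1r : 1 - r = 1 / (1 + t) := by
      rw [hr]; field_simp; ring
    have hratio : r / (1 - r) = t := by
      rw [h1r, hr]; field_simp
    rw [hratio]
    have hx1 : (1 : ℝ) / (1 + t) ≠ 1 := by
      intro h
      have : (1 : ℝ) + t = 1 := by
        field_simp at h; linarith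
      linarith
    have hlog := Real.log_lt_sub_one_of_pos (x := 1 / (1 + t))
      (by positivity) hx1
    rw [Real.log_div one_ne_zero (by positivity), Real.log_one] at hlog
    have hkey : t / (1 + t) < Real.log (1 + t) := by
      have : 1 / (1 + t) - 1 = -(t / (1 + t)) := by field_simp; ring
      rw [this] at hlog; linarith
    have : lam * t = t / (1 + t) := by
      rw [h1t]; field_simp
    linarith
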